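/- Let {(A_q,B_q,C_q)}_{q=1}^Q define an affine LPV system with scheduling set P ⊆ ℝ^Q whose linear span is ℝ^Q. For states x_1, x_2 ∈ ℝ^n, the input-output maps from x_1 and x_2 agree for all inputs and all scheduling sequences with values in P if and only if they agree for all inputs and all scheduling sequences with values in {e_1,…,e_Q}; equivalently, iff x_1 − x_2 ∈ ⋂_{k≥1, q_1,…,q_k} ker(C_{q_k}A_{q_{k-1}}⋯A_{q_1}). -/
import Mathlib


open Matrix

/-- Product of `A`-matrices along a word: for `q : Fin k → Fin Qn`,
`wordProd A q = A_{q (k-1)} ⋯ A_{q 0}` (identity for the empty word). -/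
def wordProd {Qn n : ℕ} (A : Fin Qn → Matrix (Fin n) (Fin n) ℝ) :
    {k : ℕ} → (Fin k → Fin Qn) → Matrix (Fin n) (Fin n) ℝ
  | 0, _ => 1
  | k+1, q => A (q (Fin.last k)) * wordProd A (Fin.init q)

/-- State trajectory of the affine LPV system
`x(t+1) = ∑_q p_q(t) (A_q x(t) + B_q u(t))` from initial state `x0`. -/
def lpvState {Qn n m : ℕ} (A : Fin Qn → Matrix (Fin n) (Fin n) ℝ)
    (B : Fin Qn → Matrix (Fin n) (Fin m) ℝ)
    (u : ℕ → Fin m → ℝ) (p : ℕ → Fin Qn → ℝ) (x0 : Fin n → ℝ) : ℕ → Fin n → ℝ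
  | 0 => x0
  | t+1 => ∑ q : Fin Qn, p t q • (A q *ᵥ lpvState A B u p x0 t + B q *ᵥ u t)

/-- Output `y(t) = ∑_q p_q(t) C_q x(t)` of the affine LPV system from initial state `x0`. -/
def lpvOutput {Qn n m pd : ℕ} (A : Fin Qn → Matrix (Fin n) (Fin n) ℝ)
    (B : Fin Qn → Matrix (Fin n) (Fin m) ℝ)
    (C : Fin Qn → Matrix (Fin pd) (Fin n) ℝ)
    (u : ℕ → Fin m → ℝ) (p : ℕ → Fin Qn → ℝ) (x0 : Fin n → ℝ) (t : ℕ) : Fin pd → ℝ :=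
  ∑ q : Fin Qn, p t q • (C q *ᵥ lpvState A B u p x0 t)

section Helpers

variable {Qn n m pd : ℕ}
variable (A : Fin Qn → Matrix (Fin n) (Fin n) ℝ)
variable (B : Fin Qn → Matrix (Fin n) (Fin m) ℝ)
variable (C : Fin Qn → Matrix (Fin pd) (Fin n) ℝ)

lemma lpvState_succ (u : ℕ → Fin m → ℝ) (p : ℕ → Fin Qn → ℝ) (x0 : Fin n → ℝ) (t : ℕ) :
    lpvState A B u p x0 (t+1)
      = ∑ q : Fin Qn, p t q • (A q *ᵥ lpvState A B u p x0 t + B q *ᵥ u t) := rfl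

lemma hstate_succ (p : ℕ → Fin Qn → ℝ) (x0 : Fin n → ℝ) (t : ℕ) :
    lpvState A B (0 : ℕ → Fin m → ℝ) p x0 (t+1)
      = ∑ q : Fin Qn, p t q • (A q *ᵥ lpvState A B (0 : ℕ → Fin m → ℝ) p x0 t) := by
  simp [lpvState_succ]

lemma lpvState_congr (u : ℕ → Fin m → ℝ) {p p' : ℕ → Fin Qn → ℝ} (x0 : Fin n → ℝ)
    (t : ℕ) (h : ∀ s < t, p s = p' s) :
    lpvState A B u p x0 t = lpvState A B u p' x0 t := by
  induction t with
  | zero => rfl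
  | succ t ih =>
    rw [lpvState_succ, lpvState_succ, ih (fun s hs => h s (hs.trans (Nat.lt_succ_self t))),
      h t (Nat.lt_succ_self t)]

lemma lpvState_sub (u : ℕ → Fin m → ℝ) (p : ℕ → Fin Qn → ℝ) (x1 x2 : Fin n → ℝ) (t : ℕ) :
    lpvState A B u p x1 t - lpvState A B u p x2 t
      = lpvState A B (0 : ℕ → Fin m → ℝ) p (x1 - x2) t := by
  induction t with
  | zero => rfl
  | succ t ih =>
    rw [lpvState_succ, lpvState_succ, hstate_succ, ← Finset.sum_sub_distrib]
    refine Finset.sum_congr rfl fun q _ => ?_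
    rw [← smul_sub, add_sub_add_right_eq_sub, ← Matrix.mulVec_sub, ih]

lemma lpvOutput_sub (u : ℕ → Fin m → ℝ) (p : ℕ → Fin Qn → ℝ) (x1 x2 : Fin n → ℝ) (t : ℕ) :
    lpvOutput A B C u p x1 t - lpvOutput A B C u p x2 t
      = lpvOutput A B C (0 : ℕ → Fin m → ℝ) p (x1 - x2) t := by
  unfold lpvOutput
  rw [← Finset.sum_sub_distrib]
  refine Finset.sum_congr rfl fun q _ => ?_
  rw [← smul_sub, ← Matrix.mulVec_sub, lpvState_sub]

lemma hstate_add (p : ℕ → Fin Qn → ℝ) (y z : Fin n → ℝ) (t : ℕ) :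
    lpvState A B (0 : ℕ → Fin m → ℝ) p (y + z) t
      = lpvState A B (0 : ℕ → Fin m → ℝ) p y t + lpvState A B (0 : ℕ → Fin m → ℝ) p z t := by
  induction t with
  | zero => rfl
  | succ t ih => simp [hstate_succ, ih, Matrix.mulVec_add, smul_add, Finset.sum_add_distrib]

lemma hstate_smul (p : ℕ → Fin Qn → ℝ) (c : ℝ) (y : Fin n → ℝ) (t : ℕ) :
    lpvState A B (0 : ℕ → Fin m → ℝ) p (c • y) t
      = c • lpvState A B (0 : ℕ → Fin m → ℝ) p y t := by
  induction t with
  | zero => rfl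
  | succ t ih =>
    simp [hstate_succ, ih, Matrix.mulVec_smul, Finset.smul_sum, smul_comm c]

lemma lpvState_shift (u : ℕ → Fin m → ℝ) (p : ℕ → Fin Qn → ℝ) (x0 : Fin n → ℝ) (t₀ : ℕ) :
    ∀ r, lpvState A B u p x0 (t₀ + r)
      = lpvState A B (fun s => u (t₀ + s)) (fun s => p (t₀ + s)) (lpvState A B u p x0 t₀) r
  | 0 => rfl
  | r+1 => by
    rw [show t₀ + (r+1) = (t₀ + r) + 1 from rfl, lpvState_succ, lpvState_succ,
      lpvState_shift u p x0 t₀ r]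

lemma init_cons {k : ℕ} (r : Fin Qn) (w : Fin (k+1) → Fin Qn) :
    Fin.init (Fin.cons r w : Fin (k+2) → Fin Qn) = (Fin.cons r (Fin.init w) : Fin (k+1) → Fin Qn) := by
  funext i
  rw [Fin.init_def]
  cases i using Fin.cases with
  | zero => simp
  | succ i =>
    show (Fin.cons r w : Fin (k+2) → Fin Qn) (i.succ.castSucc) = _
    rw [← Fin.succ_castSucc, Fin.cons_succ, Fin.cons_succ, Fin.init_def]

lemma last_cons {k : ℕ} (r : Fin Qn) (w : Fin (k+1) → Fin Qn) :
    (Fin.cons r w : Fin (k+2) → Fin Qn) (Fin.last (k+1)) = w (Fin.last k) := by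
  rw [← Fin.succ_last, Fin.cons_succ]

lemma wordProd_cons (r : Fin Qn) : ∀ {k : ℕ} (w : Fin k → Fin Qn),
    wordProd A (Fin.cons r w : Fin (k+1) → Fin Qn) = wordProd A w * A r
  | 0, w => by
    show A ((Fin.cons r w : Fin 1 → Fin Qn) (Fin.last 0)) * wordProd A _ = _
    rw [show (Fin.last 0) = 0 from rfl, Fin.cons_zero]
    show A r * 1 = 1 * A r
    rw [one_mul, mul_one]
  | k+1, w => by
    show A ((Fin.cons r w : Fin (k+2) → Fin Qn) (Fin.last (k+1)))
        * wordProd A (Fin.init (Fin.cons r w : Fin (k+2) → Fin Qn)) = _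
    rw [last_cons, init_cons, wordProd_cons r (Fin.init w), ← mul_assoc]
    rfl

lemma sum_single_smul {V : Type*} [AddCommMonoid V] [Module ℝ V] (r : Fin Qn) (w : Fin Qn → V) :
    ∑ q : Fin Qn, (Pi.single r 1 : Fin Qn → ℝ) q • w q = w r := by
  have : ∀ q : Fin Qn, (Pi.single r 1 : Fin Qn → ℝ) q • w q = if q = r then w q else 0 := by
    intro q
    rcases eq_or_ne q r with rfl | hq
    · simp
    · simp [Pi.single_apply, hq]
  simp only [this, Finset.sum_ite_eq', Finset.mem_univ, if_true]

lemma single_word_state (qq : ℕ → Fin Qn) (x0 : Fin n → ℝ) :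
    ∀ t, lpvState A B (0 : ℕ → Fin m → ℝ) (fun s => Pi.single (qq s) 1) x0 t
      = wordProd A (fun i : Fin t => qq i) *ᵥ x0
  | 0 => by
    show x0 = (1 : Matrix (Fin n) (Fin n) ℝ) *ᵥ x0
    rw [Matrix.one_mulVec]
  | t+1 => by
    rw [hstate_succ, single_word_state qq x0 t, sum_single_smul, Matrix.mulVec_mulVec]
    rfl

def KerSub : Submodule ℝ (Fin n → ℝ) :=
  ⨅ (k : ℕ) (q : Fin (k+1) → Fin Qn),
    LinearMap.ker (Matrix.mulVecLin (C (q (Fin.last k)) * wordProd A (Fin.init q)))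

lemma mem_KerSub_iff (x : Fin n → ℝ) :
    x ∈ KerSub A C ↔
      ∀ (k : ℕ) (q : Fin (k+1) → Fin Qn),
        C (q (Fin.last k)) *ᵥ (wordProd A (Fin.init q) *ᵥ x) = 0 := by
  simp [KerSub, Submodule.mem_iInf, LinearMap.mem_ker, Matrix.mulVecLin_apply,
    Matrix.mulVec_mulVec]

lemma KerSub_A {x : Fin n → ℝ} (hx : x ∈ KerSub A C) (r : Fin Qn) :
    A r *ᵥ x ∈ KerSub A C := by
  rw [mem_KerSub_iff] at hx ⊢
  intro k q
  have h := hx (k+1) (Fin.cons r q : Fin (k+2) → Fin Qn)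
  rw [last_cons, init_cons, wordProd_cons, ← Matrix.mulVec_mulVec] at h
  exact h

lemma KerSub_C {x : Fin n → ℝ} (hx : x ∈ KerSub A C) (r : Fin Qn) :
    C r *ᵥ x = 0 := by
  rw [mem_KerSub_iff] at hx
  have h := hx 0 (fun _ => r)
  rwa [show wordProd A (Fin.init fun _ : Fin 1 => r) = 1 from rfl, Matrix.one_mulVec] at h

lemma zero_of_span {S : Set (Fin Qn → ℝ)} (hS : Submodule.span ℝ S = ⊤)
    {V : Type*} [AddCommGroup V] [Module ℝ V] (f : (Fin Qn → ℝ) → V)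
    (hadd : ∀ v w, f (v + w) = f v + f w)
    (hsmul : ∀ (c : ℝ) v, f (c • v) = c • f v)
    (h0 : ∀ v ∈ S, f v = 0) (v : Fin Qn → ℝ) : f v = 0 := by
  let L : (Fin Qn → ℝ) →ₗ[ℝ] V :=
    { toFun := f, map_add' := hadd, map_smul' := hsmul }
  have hle : Submodule.span ℝ S ≤ LinearMap.ker L :=
    Submodule.span_le.2 fun w hw => LinearMap.mem_ker.2 (h0 w hw)
  rw [hS] at hle
  exact hle (Submodule.mem_top)

end Helpers

section Main

variable {Qn n m pd : ℕ}
variable (A : Fin Qn → Matrix (Fin n) (Fin n) ℝ)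
variable (B : Fin Qn → Matrix (Fin n) (Fin m) ℝ)
variable (C : Fin Qn → Matrix (Fin pd) (Fin n) ℝ)

lemma hout_update_last (p : ℕ → Fin Qn → ℝ) (x0 : Fin n → ℝ) (t : ℕ) (v : Fin Qn → ℝ) :
    lpvOutput A B C (0 : ℕ → Fin m → ℝ) (Function.update p t v) x0 t
      = ∑ q : Fin Qn, v q • (C q *ᵥ lpvState A B (0 : ℕ → Fin m → ℝ) p x0 t) := by
  unfold lpvOutput
  rw [Function.update_self,
    lpvState_congr A B _ x0 t (fun s hs => Function.update_of_ne (by omega) _ _)]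

lemma hout_update_lt (p : ℕ → Fin Qn → ℝ) (x0 : Fin n → ℝ) {j t : ℕ} (hjt : j < t)
    (v : Fin Qn → ℝ) :
    lpvOutput A B C (0 : ℕ → Fin m → ℝ) (Function.update p j v) x0 t
      = ∑ q : Fin Qn, p t q • (C q *ᵥ lpvState A B (0 : ℕ → Fin m → ℝ) (fun s => p (j+1+s))
          (∑ q' : Fin Qn, v q' • (A q' *ᵥ lpvState A B (0 : ℕ → Fin m → ℝ) p x0 j))
          (t - (j+1))) := by
  obtain ⟨r, rfl⟩ : ∃ r, t = j + 1 + r := ⟨t - (j+1), by omega⟩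
  have hu : (fun s => (0 : ℕ → Fin m → ℝ) (j+1+s)) = (0 : ℕ → Fin m → ℝ) := by
    funext s; rfl
  have hp : (fun s => Function.update p j v (j+1+s)) = (fun s => p (j+1+s)) := by
    funext s; exact Function.update_of_ne (by omega) _ _
  have hinner : lpvState A B (0 : ℕ → Fin m → ℝ) (Function.update p j v) x0 (j+1)
      = ∑ q' : Fin Qn, v q' • (A q' *ᵥ lpvState A B (0 : ℕ → Fin m → ℝ) p x0 j) := by
    rw [hstate_succ, Function.update_self,
      lpvState_congr A B _ x0 j (fun s hs => Function.update_of_ne (by omega) _ _)]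
  have hshift := lpvState_shift A B (0 : ℕ → Fin m → ℝ) (Function.update p j v) x0 (j+1) r
  rw [hu, hp, hinner] at hshift
  unfold lpvOutput
  rw [show j + 1 + r - (j+1) = r from by omega, hshift,
    Function.update_of_ne (show j + 1 + r ≠ j from by omega)]

lemma hout_update_add (p : ℕ → Fin Qn → ℝ) (x0 : Fin n → ℝ) {j t : ℕ} (hjt : j ≤ t)
    (v w : Fin Qn → ℝ) :
    lpvOutput A B C (0 : ℕ → Fin m → ℝ) (Function.update p j (v + w)) x0 t
      = lpvOutput A B C (0 : ℕ → Fin m → ℝ) (Function.update p j v) x0 t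
        + lpvOutput A B C (0 : ℕ → Fin m → ℝ) (Function.update p j w) x0 t := by
  rcases eq_or_lt_of_le hjt with rfl | h
  · simp only [hout_update_last, Pi.add_apply, add_smul, Finset.sum_add_distrib]
  · simp only [hout_update_lt A B C p x0 h, Pi.add_apply, add_smul, Finset.sum_add_distrib,
      hstate_add, Matrix.mulVec_add, smul_add]

lemma hout_update_smul (p : ℕ → Fin Qn → ℝ) (x0 : Fin n → ℝ) {j t : ℕ} (hjt : j ≤ t)
    (c : ℝ) (v : Fin Qn → ℝ) :
    lpvOutput A B C (0 : ℕ → Fin m → ℝ) (Function.update p j (c • v)) x0 t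
      = c • lpvOutput A B C (0 : ℕ → Fin m → ℝ) (Function.update p j v) x0 t := by
  rcases eq_or_lt_of_le hjt with rfl | h
  · simp only [hout_update_last, Pi.smul_apply, smul_eq_mul, ← smul_smul, ← Finset.smul_sum]
  · simp only [hout_update_lt A B C p x0 h, Pi.smul_apply, smul_eq_mul, ← smul_smul,
      ← Finset.smul_sum, hstate_smul, Matrix.mulVec_smul, smul_comm _ c]

lemma keyB (S : Set (Fin Qn → ℝ)) (hS : Submodule.span ℝ S = ⊤) (x0 : Fin n → ℝ) :
    (∀ p : ℕ → Fin Qn → ℝ, (∀ s, p s ∈ S) → ∀ t,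
        lpvOutput A B C (0 : ℕ → Fin m → ℝ) p x0 t = 0) ↔ x0 ∈ KerSub A C := by
  constructor
  · intro h
    rcases Set.eq_empty_or_nonempty S with rfl | ⟨pinf, hpinf⟩
    · rw [Submodule.span_empty] at hS
      have hE : IsEmpty (Fin Qn) := by
        by_contra hne
        rw [not_isEmpty_iff] at hne
        obtain ⟨r⟩ := hne
        have h1 : (Pi.single r 1 : Fin Qn → ℝ) ∈ (⊤ : Submodule ℝ (Fin Qn → ℝ)) := trivial
        rw [← hS] at h1
        have h2 := congrFun ((Submodule.mem_bot ℝ).1 h1) r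
        simp at h2
      rw [mem_KerSub_iff]
      intro k q
      exact (hE.false (q 0)).elim
    · have H' : ∀ (t : ℕ) (p : ℕ → Fin Qn → ℝ), (∀ s ≤ t, p s ∈ S) →
          lpvOutput A B C (0 : ℕ → Fin m → ℝ) p x0 t = 0 := by
        intro t p hp
        set p' : ℕ → Fin Qn → ℝ := fun s => if s ≤ t then p s else pinf with hp'
        have h1 := h p' (fun s => by
          by_cases hs : s ≤ t
          · simpa [hp', hs] using hp s hs
          · simpa [hp', hs] using hpinf) t
        have h2 : lpvOutput A B C (0 : ℕ → Fin m → ℝ) p x0 t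
            = lpvOutput A B C (0 : ℕ → Fin m → ℝ) p' x0 t := by
          unfold lpvOutput
          have e1 : ∀ s < t, p s = p' s := by
            intro s hs
            rw [hp']
            simp [Nat.le_of_lt hs]
          have e2 : p t = p' t := by
            rw [hp']; simp
          rw [lpvState_congr A B _ x0 t e1, e2]
        rw [h2]
        exact h1
      have R : ∀ (j t : ℕ) (p : ℕ → Fin Qn → ℝ),
          (∀ s, j ≤ s → s ≤ t → p s ∈ S) →
          lpvOutput A B C (0 : ℕ → Fin m → ℝ) p x0 t = 0 := by
        intro j
        induction j with
        | zero => exact fun t p hp => H' t p (fun s hs => hp s (Nat.zero_le s) hs)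
        | succ j ih =>
          intro t p hp
          by_cases hjt : j ≤ t
          · have key : ∀ v : Fin Qn → ℝ,
                lpvOutput A B C (0 : ℕ → Fin m → ℝ) (Function.update p j v) x0 t = 0 := by
              apply zero_of_span hS
              · exact fun v w => hout_update_add A B C p x0 hjt v w
              · exact fun c v => hout_update_smul A B C p x0 hjt c v
              · intro v hv
                apply ih t (Function.update p j v)
                intro s hs1 hs2
                rcases eq_or_ne s j with rfl | hsj
                · rwa [Function.update_self]
                · rw [Function.update_of_ne hsj]
                  exact hp s (by omega) hs2
            have hk := key (p j)
            rwa [Function.update_eq_self] at hk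
          · exact ih t p (fun s hs1 hs2 => (hjt (hs1.trans hs2)).elim)
      have Hall : ∀ (t : ℕ) (p : ℕ → Fin Qn → ℝ),
          lpvOutput A B C (0 : ℕ → Fin m → ℝ) p x0 t = 0 :=
        fun t p => R (t+1) t p (fun s hs1 hs2 => absurd (hs1.trans hs2) (by omega))
      rw [mem_KerSub_iff]
      intro k q
      set qq : ℕ → Fin Qn := fun s => q ⟨min s k, by omega⟩ with hqq
      have h1 := Hall k (fun s => Pi.single (qq s) 1)
      unfold lpvOutput at h1
      rw [single_word_state A B qq x0 k, sum_single_smul] at h1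
      have e1 : qq k = q (Fin.last k) := by
        show q ⟨min k k, _⟩ = q (Fin.last k)
        congr 1
        exact Fin.ext (min_self k)
      have e2 : (fun i : Fin k => qq i) = Fin.init q := by
        funext i
        show q ⟨min i.val k, _⟩ = q i.castSucc
        congr 1
        exact Fin.ext (Nat.min_eq_left (Nat.le_of_lt i.isLt))
      rw [e1, e2] at h1
      exact h1
  · intro hx p hp t
    have hmem : ∀ t, lpvState A B (0 : ℕ → Fin m → ℝ) p x0 t ∈ KerSub A C := by
      intro t
      induction t with
      | zero => exact hx
      | succ t ih =>
        rw [hstate_succ]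
        exact Submodule.sum_mem _ (fun q _ => Submodule.smul_mem _ _ (KerSub_A A C ih q))
    unfold lpvOutput
    have hz := fun q => KerSub_C A C (hmem t) q
    simp only [hz, smul_zero, Finset.sum_const_zero]

lemma master (S : Set (Fin Qn → ℝ)) (hS : Submodule.span ℝ S = ⊤) (x1 x2 : Fin n → ℝ) :
    (∀ (u : ℕ → Fin m → ℝ) (p : ℕ → Fin Qn → ℝ), (∀ s, p s ∈ S) →
        ∀ t, lpvOutput A B C u p x1 t = lpvOutput A B C u p x2 t)
      ↔ x1 - x2 ∈ KerSub A C := by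
  rw [← keyB A B C S hS (x1 - x2)]
  constructor
  · intro h p hp t
    rw [← lpvOutput_sub A B C (0 : ℕ → Fin m → ℝ) p, h (0 : ℕ → Fin m → ℝ) p hp t, sub_self]
  · intro h u p hp t
    have h1 := h p hp t
    rw [← lpvOutput_sub A B C u p] at h1
    exact sub_eq_zero.1 h1

lemma span_single : Submodule.span ℝ
    (Set.range fun q : Fin Qn => (Pi.single q 1 : Fin Qn → ℝ)) = ⊤ := by
  rw [eq_top_iff]
  intro v _
  have hv : v = ∑ q : Fin Qn, v q • (Pi.single q 1 : Fin Qn → ℝ) := by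
    funext j
    simp [Pi.single_apply]
  rw [hv]
  exact Submodule.sum_mem _ fun q _ => Submodule.smul_mem _ _ (Submodule.subset_span ⟨q, rfl⟩)

end Main


/-- If the scheduling set `P` spans `ℝ^Q`, then two states `x1, x2` are indistinguishable
for all inputs and scheduling signals with values in `P` iff they are indistinguishable
for scheduling signals with values in the standard basis `{e_1,…,e_Q}`, iff
`x1 - x2 ∈ ⋂ ker (C_{q_k} A_{q_{k-1}} ⋯ A_{q_1})`. -/
theorem stmt14 {Qn n m pd : ℕ}
    (A : Fin Qn → Matrix (Fin n) (Fin n) ℝ)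
    (B : Fin Qn → Matrix (Fin n) (Fin m) ℝ)
    (C : Fin Qn → Matrix (Fin pd) (Fin n) ℝ)
    (P : Set (Fin Qn → ℝ)) (hP : Submodule.span ℝ P = ⊤)
    (x1 x2 : Fin n → ℝ) :
    ((∀ (u : ℕ → Fin m → ℝ) (p : ℕ → Fin Qn → ℝ), (∀ s, p s ∈ P) →
        ∀ t, lpvOutput A B C u p x1 t = lpvOutput A B C u p x2 t) ↔
      (∀ (u : ℕ → Fin m → ℝ) (p : ℕ → Fin Qn → ℝ),
        (∀ s, p s ∈ Set.range fun q : Fin Qn => (Pi.single q 1 : Fin Qn → ℝ)) →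
        ∀ t, lpvOutput A B C u p x1 t = lpvOutput A B C u p x2 t)) ∧
    ((∀ (u : ℕ → Fin m → ℝ) (p : ℕ → Fin Qn → ℝ), (∀ s, p s ∈ P) →
        ∀ t, lpvOutput A B C u p x1 t = lpvOutput A B C u p x2 t) ↔
      x1 - x2 ∈ ⨅ (k : ℕ) (q : Fin (k+1) → Fin Qn),
        LinearMap.ker (Matrix.mulVecLin (C (q (Fin.last k)) * wordProd A (Fin.init q)))) := by
  have h2 := master A B C P hP x1 x2
  have h1 := master A B C _ span_single x1 x2
  exact ⟨h2.trans h1.symm, h2⟩
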